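/- arXiv:1802.09936 — 2 statements merged into one kernel-verified Lean document; each statement's English description precedes it below -/
import Mathlib

section
/- Let 0 < l < π/2, let g ∈ C([0,l]) with g ≥ 0 on [0,l], and let G ∈ C²([0,l]) satisfy G'' + 4G = g with G(0) = G(l) = 0. Then G ≤ 0 on [0,l] (and consequently G'' ≥ g on [0,l]). -/
open MeasureTheory Metric Set Filter Topology

noncomputable section

/-- maximum principle for `G'' + 4G = g` on `[0,l]`, `l < π/2`.
If `g ∈ C([0,l])` is nonnegative and `G ∈ C²([0,l])` satisfies `G'' + 4G = g` with
`G(0) = G(l) = 0`, then `G ≤ 0` on `[0,l]` and consequently `G'' ≥ g` on `[0,l]`. -/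
theorem stmt_11 (l : ℝ) (hl0 : 0 < l) (hl : l < Real.pi / 2)
    (g G : ℝ → ℝ)
    (hg : ContinuousOn g (Icc 0 l))
    (hgpos : ∀ θ ∈ Icc (0:ℝ) l, 0 ≤ g θ)
    (hG : ContDiffOn ℝ 2 G (Icc 0 l))
    (hode : ∀ θ ∈ Icc (0:ℝ) l,
      derivWithin (fun θ' => derivWithin G (Icc (0:ℝ) l) θ') (Icc (0:ℝ) l) θ + 4 * G θ = g θ)
    (hG0 : G 0 = 0) (hGl : G l = 0) :
    ∀ θ ∈ Icc (0:ℝ) l, G θ ≤ 0 ∧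
      g θ ≤ derivWithin (fun θ' => derivWithin G (Icc (0:ℝ) l) θ') (Icc (0:ℝ) l) θ := by
  have hUD : UniqueDiffOn ℝ (Icc (0:ℝ) l) := uniqueDiffOn_Icc hl0
  have hGdiff : DifferentiableOn ℝ G (Icc (0:ℝ) l) := hG.differentiableOn (by norm_num)
  have hG' : ContDiffOn ℝ 1 (derivWithin G (Icc (0:ℝ) l)) (Icc (0:ℝ) l) :=
    hG.derivWithin hUD (by norm_num)
  have hInt : ∀ x ∈ Ioo (0:ℝ) l, Icc (0:ℝ) l ∈ 𝓝 x := fun x hx => Icc_mem_nhds hx.1 hx.2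
  have heq : ∀ x ∈ Ioo (0:ℝ) l, derivWithin G (Icc (0:ℝ) l) =ᶠ[𝓝 x] deriv G := by
    intro x hx
    filter_upwards [isOpen_Ioo.mem_nhds hx] with y hy
    exact derivWithin_of_mem_nhds (hInt y hy)
  have hG2 : ∀ x ∈ Ioo (0:ℝ) l, deriv (deriv G) x = g x - 4 * G x := by
    intro x hx
    have h1 : derivWithin (fun θ' => derivWithin G (Icc (0:ℝ) l) θ') (Icc (0:ℝ) l) x
        = deriv (derivWithin G (Icc (0:ℝ) l)) x := derivWithin_of_mem_nhds (hInt x hx)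
    have h2 : deriv (derivWithin G (Icc (0:ℝ) l)) x = deriv (deriv G) x := (heq x hx).deriv_eq
    have h3 := hode x (Ioo_subset_Icc_self hx)
    rw [h1, h2] at h3
    linarith
  have hdG : ∀ x ∈ Ioo (0:ℝ) l, DifferentiableAt ℝ G x := fun x hx =>
    (hGdiff x (Ioo_subset_Icc_self hx)).differentiableAt (hInt x hx)
  have hdG' : ∀ x ∈ Ioo (0:ℝ) l, DifferentiableAt ℝ (deriv G) x := by
    intro x hx
    have hd : DifferentiableAt ℝ (derivWithin G (Icc (0:ℝ) l)) x :=
      ((hG'.differentiableOn one_ne_zero) x (Ioo_subset_Icc_self hx)).differentiableAt (hInt x hx)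
    exact ((heq x hx).differentiableAt_iff).mp hd
  have key : ∀ θ ∈ Icc (0:ℝ) l, G θ ≤ 0 := by
    by_contra hcon
    push_neg at hcon
    obtain ⟨θ₀, hθ₀S, hθ₀⟩ := hcon
    have hwpos : ∀ θ ∈ Icc (0:ℝ) l, 0 < Real.cos (2*θ - l) := by
      intro θ hθ
      apply Real.cos_pos_of_mem_Ioo
      constructor
      · have := hθ.1; linarith
      · have := hθ.2; linarith
    have hGcont : ContinuousOn G (Icc (0:ℝ) l) := hG.continuousOn
    have hhcont : ContinuousOn (fun θ => G θ / Real.cos (2*θ - l)) (Icc (0:ℝ) l) := by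
      apply hGcont.div
      · fun_prop
      · exact fun θ hθ => (hwpos θ hθ).ne'
    obtain ⟨θs, hθsS, hmax⟩ := isCompact_Icc.exists_isMaxOn (nonempty_Icc.mpr hl0.le) hhcont
    set M : ℝ := G θs / Real.cos (2*θs - l) with hMdef
    have hM0 : 0 < M :=
      lt_of_lt_of_le (div_pos hθ₀ (hwpos θ₀ hθ₀S)) (hmax hθ₀S)
    set v : ℝ → ℝ := fun θ => G θ - M * Real.cos (2*θ - l) with hvdef
    have hvle : ∀ θ ∈ Icc (0:ℝ) l, v θ ≤ 0 := by
      intro θ hθ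
      have h1 : G θ / Real.cos (2*θ - l) ≤ M := hmax hθ
      have hw := hwpos θ hθ
      have : G θ ≤ M * Real.cos (2*θ - l) := by
        rw [div_le_iff₀ hw] at h1; linarith
      simp only [hvdef]; linarith
    have hvθs : v θs = 0 := by
      have hw := (hwpos θs hθsS).ne'
      simp only [hvdef, hMdef]
      field_simp
      ring
    -- derivative of the cosine comparison function
    have hw' : ∀ x : ℝ, HasDerivAt (fun θ => Real.cos (2*θ - l)) (-2 * Real.sin (2*x - l)) x := by
      intro x
      have h1 : HasDerivAt (fun θ : ℝ => 2*θ - l) 2 x := by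
        simpa using ((hasDerivAt_id x).const_mul 2).sub_const l
      have h2 := (Real.hasDerivAt_cos (2*x - l)).comp x h1
      exact h2.congr_deriv (by ring)
    have hs' : ∀ x : ℝ, HasDerivAt (fun θ => Real.sin (2*θ - l)) (2 * Real.cos (2*x - l)) x := by
      intro x
      have h1 : HasDerivAt (fun θ : ℝ => 2*θ - l) 2 x := by
        simpa using ((hasDerivAt_id x).const_mul 2).sub_const l
      have h2 := (Real.hasDerivAt_sin (2*x - l)).comp x h1
      exact h2.congr_deriv (by ring)
    have hvd : ∀ x ∈ Ioo (0:ℝ) l,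
        HasDerivAt v (deriv G x + 2 * M * Real.sin (2*x - l)) x := by
      intro x hx
      have hd := ((hdG x hx).hasDerivAt).sub ((hw' x).const_mul M)
      exact hd.congr_deriv (by ring)
    have hvderiv : ∀ x ∈ Ioo (0:ℝ) l,
        deriv v x = deriv G x + 2 * M * Real.sin (2*x - l) := fun x hx => (hvd x hx).deriv
    have hvd2 : ∀ x ∈ Ioo (0:ℝ) l,
        deriv (deriv v) x = deriv (deriv G) x + 4 * M * Real.cos (2*x - l) := by
      intro x hx
      have heq2 : deriv v =ᶠ[𝓝 x] fun y => deriv G y + 2 * M * Real.sin (2*y - l) := by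
        filter_upwards [isOpen_Ioo.mem_nhds hx] with y hy
        exact hvderiv y hy
      rw [heq2.deriv_eq]
      have hd := ((hdG' x hx).hasDerivAt).add (((hs' x).const_mul (2*M)))
      have := hd.deriv
      change deriv (deriv G + fun y => 2 * M * Real.sin (2*y - l)) x = _
      rw [this]; ring
    have hconv : ConvexOn ℝ (Icc (0:ℝ) l) v := by
      apply convexOn_of_deriv2_nonneg (convex_Icc 0 l)
      · apply hGcont.sub
        apply ContinuousOn.mul continuousOn_const
        fun_prop
      · rw [interior_Icc]
        intro x hx
        exact ((hvd x hx).differentiableAt).differentiableWithinAt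
      · rw [interior_Icc]
        intro x hx
        have heq2 : (fun y => deriv G y + 2 * M * Real.sin (2*y - l)) =ᶠ[𝓝 x] deriv v := by
          filter_upwards [isOpen_Ioo.mem_nhds hx] with y hy
          exact (hvderiv y hy).symm
        have hd : DifferentiableAt ℝ (fun y => deriv G y + 2 * M * Real.sin (2*y - l)) x :=
          ((hdG' x hx).add (((hs' x).const_mul (2*M)).differentiableAt))
        exact ((heq2.differentiableAt_iff).mp hd).differentiableWithinAt
      · rw [interior_Icc]
        intro x hx
        have h2 : deriv^[2] v x = deriv (deriv v) x := by
          simp [Function.iterate_succ, Function.iterate_one]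
        rw [h2, hvd2 x hx, hG2 x hx]
        have hvx := hvle x (Ioo_subset_Icc_self hx)
        have hgx := hgpos x (Ioo_subset_Icc_self hx)
        simp only [hvdef] at hvx
        linarith
    have hcosl : 0 < Real.cos l := Real.cos_pos_of_mem_Ioo ⟨by linarith, hl⟩
    have hv0 : v 0 = -(M * Real.cos l) := by
      simp only [hvdef, hG0]
      rw [show (2*(0:ℝ) - l) = -l by ring, Real.cos_neg]
      ring
    have hvl : v l = -(M * Real.cos l) := by
      simp only [hvdef, hGl]
      rw [show (2*l - l) = l by ring]
      ring
    have ha : (0:ℝ) ≤ (l - θs)/l := by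
      apply div_nonneg _ hl0.le; linarith [hθsS.2]
    have hb : (0:ℝ) ≤ θs/l := div_nonneg hθsS.1 hl0.le
    have hab : (l - θs)/l + θs/l = 1 := by field_simp; ring
    have hcomb := hconv.2 (left_mem_Icc.mpr hl0.le) (right_mem_Icc.mpr hl0.le) ha hb hab
    rw [smul_eq_mul, smul_eq_mul, smul_eq_mul, smul_eq_mul] at hcomb
    have hpt : (l - θs)/l * 0 + θs/l * l = θs := by field_simp; ring
    rw [hpt, hv0, hvl, hvθs] at hcomb
    nlinarith [mul_pos hM0 hcosl]
  intro θ hθ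
  refine ⟨key θ hθ, ?_⟩
  have h3 := hode θ hθ
  have := key θ hθ
  linarith
end
end

section
/- Let c > 0. There do not exist continuously differentiable functions x, y : [0,∞) → ℝ satisfying x(0) ≥ 0, y(0) > 0, and for all t ≥ 0, x'(t) ≥ c·y(t) and y'(t) ≥ c·x(t)·y(t). Equivalently, any pair of C¹ functions satisfying these differential inequalities on a maximal interval [0,T) must have T < ∞ and become unbounded as t → T. -/
open MeasureTheory Metric Set Filter Topology

noncomputable section

/-- Auxiliary growth lemma: if the one-sided derivative of `f` on `[0,∞)` is at least `K`
on the open interval `(a,b)`, then `f b ≥ f a + K * (b - a)`. -/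
private lemma grow_aux (f : ℝ → ℝ) (hf : ContDiffOn ℝ 1 f (Ici 0))
    {a b : ℝ} (K : ℝ) (ha : 0 ≤ a) (hab : a ≤ b)
    (hK : ∀ t ∈ Ioo a b, K ≤ derivWithin f (Ici (0:ℝ)) t) :
    f a + K * (b - a) ≤ f b := by
  have hderiv : ∀ t ∈ Ioo a b, HasDerivAt f (derivWithin f (Ici (0:ℝ)) t) t := by
    intro t ht
    have ht0 : 0 < t := lt_of_le_of_lt ha ht.1
    have hmem : Ici (0:ℝ) ∈ 𝓝 t := Ici_mem_nhds ht0
    have hd : DifferentiableWithinAt ℝ f (Ici (0:ℝ)) t :=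
      hf.differentiableOn one_ne_zero t ht0.le
    exact hd.hasDerivWithinAt.hasDerivAt hmem
  have hmono : MonotoneOn (fun t => f t - K * t) (Icc a b) := by
    apply monotoneOn_of_deriv_nonneg (convex_Icc a b)
    · exact ((hf.continuousOn.mono (fun t ht => le_trans ha ht.1)).sub
        ((continuous_const.mul continuous_id).continuousOn))
    · intro t ht
      rw [interior_Icc] at ht
      exact ((hderiv t ht).sub ((hasDerivAt_id t).const_mul K)).differentiableAt.differentiableWithinAt
    · intro t ht
      rw [interior_Icc] at ht
      have h1 : HasDerivAt (fun t => f t - K * t)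
          (derivWithin f (Ici (0:ℝ)) t - K * 1) t :=
        (hderiv t ht).sub ((hasDerivAt_id t).const_mul K)
      rw [h1.deriv]
      have := hK t ht
      linarith
  have h := hmono (left_mem_Icc.2 hab) (right_mem_Icc.2 hab) hab
  simp only at h
  linarith

private lemma arith1 {r a A B X : ℝ} (hr : r ≤ 2) (ha : 0 < a) (hA : a ≤ A)
    (hB : a ^ 2 ≤ B) (hX : A ^ 2 + B ≤ A * X) (hApos : 0 < A) : r * a ≤ X := by
  have h1 : r * a * A ≤ A ^ 2 + B := by nlinarith [sq_nonneg (A - a), mul_pos ha hApos]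
  have h2 : r * a * A ≤ A * X := le_trans h1 hX
  have h3 : r * a * A ≤ X * A := by linarith [h2]
  exact le_of_mul_le_mul_right h3 hApos

/-- the differential-inequality blow-up mechanism.  For any `c > 0`
there are no continuously differentiable functions `x, y` on `[0,∞)` with `x(0) ≥ 0`,
`y(0) > 0` satisfying `x' ≥ c·y` and `y' ≥ c·x·y` for all `t ≥ 0`. -/
theorem stmt_13 (c : ℝ) (hc : 0 < c) :
    ¬ ∃ x y : ℝ → ℝ,
      ContDiffOn ℝ 1 x (Ici 0) ∧ ContDiffOn ℝ 1 y (Ici 0) ∧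
      0 ≤ x 0 ∧ 0 < y 0 ∧
      (∀ t ∈ Ici (0:ℝ), c * y t ≤ derivWithin x (Ici (0:ℝ)) t) ∧
      (∀ t ∈ Ici (0:ℝ), c * x t * y t ≤ derivWithin y (Ici (0:ℝ)) t) := by
  rintro ⟨x, y, hx, hy, hx0, hy0, hx', hy'⟩
  -- Step 1: y is positive on [0, ∞).
  have hypos : ∀ t, 0 ≤ t → 0 < y t := by
    by_contra h
    push_neg at h
    obtain ⟨t1, ht1, hyt1⟩ := h
    set S : Set ℝ := {t | 0 ≤ t ∧ y t ≤ 0} with hS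
    have hSne : S.Nonempty := ⟨t1, ht1, hyt1⟩
    have hSbdd : BddBelow S := ⟨0, fun t ht => ht.1⟩
    have hScl : IsClosed S := by
      have : S = Ici (0:ℝ) ∩ y ⁻¹' Iic (0:ℝ) := by
        ext t
        simp only [hS, Set.mem_setOf_eq, Set.mem_inter_iff, Set.mem_Ici,
          Set.mem_preimage, Set.mem_Iic]
      rw [this]
      exact hy.continuousOn.preimage_isClosed_of_isClosed isClosed_Ici isClosed_Iic
    set t0 := sInf S with ht0def
    have ht0S : t0 ∈ S := hScl.csInf_mem hSne hSbdd
    have ht0nonneg : 0 ≤ t0 := ht0S.1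
    have hyt0 : y t0 ≤ 0 := ht0S.2
    have ht0pos : 0 < t0 := by
      rcases lt_or_eq_of_le ht0nonneg with h | h
      · exact h
      · exfalso; rw [← h] at hyt0; linarith
    have hylt : ∀ t, 0 ≤ t → t < t0 → 0 < y t := by
      intro t ht htlt
      by_contra hcon
      push_neg at hcon
      have : t0 ≤ t := csInf_le hSbdd ⟨ht, hcon⟩
      linarith
    -- x is nondecreasing on [0, t0], hence nonnegative there
    have hxge : ∀ s, 0 ≤ s → s ≤ t0 → x 0 ≤ x s := by
      intro s hs hst0
      have := grow_aux x hx 0 le_rfl hs (fun t ht => by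
        have hyt : 0 < y t := hylt t ht.1.le (lt_of_lt_of_le ht.2 hst0)
        have := hx' t ht.1.le
        have h0 : 0 < c * y t := mul_pos hc hyt
        linarith)
      linarith
    -- then y is nondecreasing on [0, t0]
    have := grow_aux y hy 0 le_rfl ht0pos.le (fun t ht => by
      have hyt : 0 < y t := hylt t ht.1.le ht.2
      have hxt : 0 ≤ x t := le_trans hx0 (hxge t ht.1.le ht.2.le)
      have := hy' t ht.1.le
      have h0 : 0 ≤ c * x t * y t := mul_nonneg (mul_nonneg hc.le hxt) hyt.le
      linarith)
    linarith
  -- Step 2: monotonicity and positivity facts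
  have hx_mono : ∀ a b : ℝ, 0 ≤ a → a ≤ b → x a ≤ x b := by
    intro a b ha hab
    have := grow_aux x hx 0 ha hab (fun t ht => by
      have h1 := hx' t (le_trans ha ht.1.le)
      have h2 := hypos t (le_trans ha ht.1.le)
      have h0 : 0 < c * y t := mul_pos hc h2
      linarith)
    linarith
  have hx_nonneg : ∀ t, 0 ≤ t → 0 ≤ x t := fun t ht => le_trans hx0 (hx_mono 0 t le_rfl ht)
  have hy_mono : ∀ a b : ℝ, 0 ≤ a → a ≤ b → y a ≤ y b := by
    intro a b ha hab
    have := grow_aux y hy 0 ha hab (fun t ht => by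
      have ht0 : (0:ℝ) ≤ t := le_trans ha ht.1.le
      have h1 := hy' t ht0
      have h2 := hypos t ht0
      have h3 := hx_nonneg t ht0
      have h0 : 0 ≤ c * x t * y t := mul_nonneg (mul_nonneg hc.le h3) h2.le
      linarith)
    linarith
  -- Step 3: x 1 is positive
  have hx1 : c * y 0 ≤ x 1 := by
    have := grow_aux x hx (c * y 0) le_rfl zero_le_one (fun t ht => by
      have h1 := hx' t ht.1.le
      have h2 := hy_mono 0 t le_rfl ht.1.le
      have h0 : c * y 0 ≤ c * y t := mul_le_mul_of_nonneg_left h2 hc.le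
      linarith)
    linarith
  have hx1pos : 0 < x 1 := lt_of_lt_of_le (by positivity) hx1
  have hy1pos : 0 < y 1 := hypos 1 zero_le_one
  -- Constants
  set B0 : ℝ := y 1 with hB0
  set G : ℝ := min ((x 1) ^ 2) B0 with hGdef
  have hGpos : 0 < G := lt_min (by positivity) hy1pos
  set sG : ℝ := Real.sqrt G with hsGdef
  have hsGpos : 0 < sG := Real.sqrt_pos.2 hGpos
  have hsG2 : sG ^ 2 = G := Real.sq_sqrt hGpos.le
  set r : ℝ := Real.sqrt 2 with hrdef
  have hr2 : r ^ 2 = 2 := Real.sq_sqrt (by norm_num)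
  have hrpos : 0 < r := Real.sqrt_pos.2 (by norm_num)
  have hr1 : 1 < r := by nlinarith
  have hrle2 : r ≤ 2 := by nlinarith
  set q : ℝ := r⁻¹ with hqdef
  have hqpos : 0 < q := by positivity
  have hq1 : q < 1 := by
    rw [hqdef]
    exact inv_lt_one_of_one_lt₀ hr1
  set E : ℝ := 1 / (c * sG) with hEdef
  have hEpos : 0 < E := by positivity
  set D : ℝ := E / (1 - q) with hDdef
  have hDpos : 0 < D := div_pos hEpos (by linarith)
  have hDE : E = D * (1 - q) := by
    rw [hDdef]
    exact (div_mul_cancel₀ E (by linarith : (1:ℝ) - q ≠ 0)).symm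
  -- The sequence of times
  obtain ⟨τ, hτ0, hτs⟩ : ∃ τ : ℕ → ℝ, τ 0 = 1 ∧
      ∀ n, τ (n+1) = τ n + 1 / (c * x (τ n)) :=
    ⟨fun n => Nat.rec 1 (fun _ s => s + 1 / (c * x s)) n, rfl, fun n => rfl⟩
  -- The inductive invariant
  have key : ∀ n : ℕ, 1 ≤ τ n ∧ sG * r ^ n ≤ x (τ n) ∧ (2:ℝ) ^ n * B0 ≤ y (τ n) ∧
      τ n ≤ 1 + D * (1 - q ^ n) := by
    intro n
    induction n with
    | zero =>
      refine ⟨le_of_eq hτ0.symm, ?_, ?_, ?_⟩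
      · rw [hτ0]
        have h1 : sG ≤ Real.sqrt ((x 1) ^ 2) := Real.sqrt_le_sqrt (min_le_left _ _)
        rw [Real.sqrt_sq hx1pos.le] at h1
        simpa using h1
      · rw [hτ0]; simp [hB0]
      · rw [hτ0]; norm_num
    | succ n ih =>
      obtain ⟨ht1, hA, hB, hT⟩ := ih
      set A : ℝ := x (τ n) with hAdef
      set B : ℝ := y (τ n) with hBdef
      have hτnn : (0:ℝ) ≤ τ n := le_trans zero_le_one ht1
      have hApos : 0 < A := lt_of_lt_of_le (by positivity) hA
      have hBpos : 0 < B := hypos _ hτnn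
      have hstep : τ (n+1) = τ n + 1 / (c * A) := hτs n
      have hδpos : 0 < 1 / (c * A) := by positivity
      have hτle : τ n ≤ τ (n+1) := by rw [hstep]; linarith
      have ht1' : 1 ≤ τ (n+1) := le_trans ht1 hτle
      -- growth of y on the step
      have hystep : B + c * A * B * (1 / (c * A)) ≤ y (τ (n+1)) := by
        have := grow_aux y hy (c * A * B) hτnn hτle (fun t ht => by
          have ht0 : (0:ℝ) ≤ t := le_trans hτnn ht.1.le
          have h1 := hy' t ht0
          have h2 := hx_mono (τ n) t hτnn ht.1.le
          have h3 := hy_mono (τ n) t hτnn ht.1.le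
          have h0 : c * A * B ≤ c * x t * y t :=
            mul_le_mul (mul_le_mul_of_nonneg_left h2 hc.le) h3 hBpos.le
              (mul_nonneg hc.le (le_trans hApos.le h2))
          linarith)
        rw [hstep]; rw [hstep] at this; linarith
      have hcA : c * A ≠ 0 := (mul_pos hc hApos).ne'
      have hyB : 2 * B ≤ y (τ (n+1)) := by
        have : c * A * B * (1 / (c * A)) = B := by field_simp
        rw [this] at hystep; linarith
      -- growth of x on the step
      have hxstep : A + c * B * (1 / (c * A)) ≤ x (τ (n+1)) := by
        have := grow_aux x hx (c * B) hτnn hτle (fun t ht => by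
          have ht0 : (0:ℝ) ≤ t := le_trans hτnn ht.1.le
          have h1 := hx' t ht0
          have h2 := hy_mono (τ n) t hτnn ht.1.le
          have h0 : c * B ≤ c * y t := mul_le_mul_of_nonneg_left h2 hc.le
          linarith)
        rw [hstep]; rw [hstep] at this; linarith
      have hxgain : A + B / A ≤ x (τ (n+1)) := by
        have : c * B * (1 / (c * A)) = B / A := by field_simp
        rwa [this] at hxstep
      -- new lower bound on x (τ (n+1))
      have hGB0 : G ≤ B0 := min_le_right _ _
      have hrn2 : (r ^ n) ^ 2 = 2 ^ n := by
        rw [← pow_mul, mul_comm, pow_mul, hr2]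
      have ha2 : (sG * r ^ n) ^ 2 ≤ B := by
        have h1 : (sG * r ^ n) ^ 2 = G * 2 ^ n := by
          rw [mul_pow, hsG2, hrn2]
        rw [h1]
        calc G * 2 ^ n ≤ B0 * 2 ^ n := by
              apply mul_le_mul_of_nonneg_right hGB0 (by positivity)
          _ = 2 ^ n * B0 := by ring
          _ ≤ B := hB
      have hAA' : A ^ 2 + B ≤ A * x (τ (n+1)) := by
        have h1 : A * (A + B / A) = A ^ 2 + B := by field_simp
        calc A ^ 2 + B = A * (A + B / A) := h1.symm
          _ ≤ A * x (τ (n+1)) := by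
              apply mul_le_mul_of_nonneg_left hxgain hApos.le
      have hAnew : sG * r ^ (n+1) ≤ x (τ (n+1)) := by
        have hrn : (0:ℝ) < r ^ n := by positivity
        have hapos : 0 < sG * r ^ n := mul_pos hsGpos hrn
        have hmain := arith1 hrle2 hapos hA ha2 hAA' hApos
        have heq : sG * r ^ (n+1) = r * (sG * r ^ n) := by ring
        linarith
      -- new lower bound on y
      have hBnew : (2:ℝ) ^ (n+1) * B0 ≤ y (τ (n+1)) := by
        calc (2:ℝ) ^ (n+1) * B0 = 2 * (2 ^ n * B0) := by ring
          _ ≤ 2 * B := by linarith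
          _ ≤ y (τ (n+1)) := hyB
      -- new time bound
      have hδle : 1 / (c * A) ≤ E * q ^ n := by
        have hrn : (0:ℝ) < r ^ n := by positivity
        have h1 : c * sG * r ^ n ≤ c * A := by
          have := mul_le_mul_of_nonneg_left hA hc.le
          calc c * sG * r ^ n = c * (sG * r ^ n) := by ring
            _ ≤ c * A := this
        have h2 : 1 / (c * A) ≤ 1 / (c * sG * r ^ n) :=
          one_div_le_one_div_of_le (by positivity) h1
        have h3 : 1 / (c * sG * r ^ n) = E * q ^ n := by
          rw [hEdef, hqdef, inv_pow]
          field_simp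
        rw [← h3]; exact h2
      have hTnew : τ (n+1) ≤ 1 + D * (1 - q ^ (n+1)) := by
        have harith : D * (1 - q ^ n) + E * q ^ n = D * (1 - q ^ (n+1)) := by
          rw [hDE, pow_succ]; ring
        rw [hstep]
        calc τ n + 1 / (c * A) ≤ (1 + D * (1 - q ^ n)) + E * q ^ n := by linarith
          _ = 1 + D * (1 - q ^ (n+1)) := by rw [← harith]; ring
      exact ⟨ht1', hAnew, hBnew, hTnew⟩
  -- Final contradiction: x is bounded on [0, 1 + D] but x (τ n) → ∞
  set T : ℝ := 1 + D with hTdef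
  have hτmem : ∀ n, τ n ∈ Icc (0:ℝ) T := by
    intro n
    obtain ⟨h1, _, _, h4⟩ := key n
    constructor
    · linarith
    · have hqn : 0 ≤ q ^ n := by positivity
      have hqn1 : q ^ n ≤ 1 := pow_le_one₀ hqpos.le hq1.le
      nlinarith
  have hxcont : ContinuousOn x (Icc (0:ℝ) T) :=
    hx.continuousOn.mono (fun t ht => ht.1)
  obtain ⟨z, hz, hmax⟩ := isCompact_Icc.exists_isMaxOn
    (Set.nonempty_Icc.2 (by linarith [(hτmem 0).1, (hτmem 0).2])) hxcont
  set M : ℝ := x z with hMdef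
  have hMbound : ∀ n, x (τ n) ≤ M := fun n => hmax (hτmem n)
  obtain ⟨n, hn⟩ := pow_unbounded_of_one_lt (M / sG) hr1
  have h1 : sG * r ^ n ≤ x (τ n) := (key n).2.1
  have h2 : M < sG * r ^ n := by
    rw [div_lt_iff₀ hsGpos] at hn
    linarith [hn]
  linarith [hMbound n]

end
end
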